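/- Let f be an L²-section in the kernel of the negative Dirac operator of an L²-finite instanton twisted by ξ, with ‖f‖_{L²} = 1, and set F(t) = ∫_{{t}×T³} |f|². Assume there are K, κ > 0 with F'(t) ≤ -κF(t) for t > K and F'(t) ≥ κF(t) for t < -K. Then |∫_ℝ t·F(t) dt| ≤ 2K + κ⁻¹. -/

import Mathlib

open MeasureTheory Set Filter Real

lemma hpb_exp_bound (F : ℝ → ℝ) (K κ : ℝ) (hκ : 0 < κ)
    (hC1 : ContDiff ℝ 1 F) (hnonneg : ∀ t, 0 ≤ F t)
    (hdec : ∀ t, K < t → deriv F t ≤ -κ * F t) :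
    ∀ s, K ≤ s → ∀ t, s ≤ t → F t ≤ F s * Real.exp (-(κ * (t - s)))  := by
  have hdiff : Differentiable ℝ F := hC1.differentiable one_ne_zero
  set W : ℝ → ℝ := fun t => F t * Real.exp (κ * t) with hWdef
  have hWd : ∀ x, HasDerivAt W (deriv F x * Real.exp (κ * x) + F x * (Real.exp (κ * x) * κ)) x := by
    intro x
    exact ((hdiff x).hasDerivAt).mul (by simpa using ((hasDerivAt_id x).const_mul κ).exp)
  have hW : AntitoneOn W (Ici K) := by
    apply antitoneOn_of_deriv_nonpos (convex_Ici K)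
    · exact (hdiff.continuous.mul (Real.continuous_exp.comp (continuous_const.mul continuous_id))).continuousOn
    · intro x _
      exact ((hWd x).differentiableAt).differentiableWithinAt
    · intro x hx
      rw [interior_Ici] at hx
      rw [(hWd x).deriv]
      have h1 := hdec x hx
      have h2 := Real.exp_pos (κ * x)
      have h3 := hnonneg x
      nlinarith
  intro s hs t hst
  have h := hW hs (mem_Ici.2 (hs.trans hst)) hst
  have e : Real.exp (-(κ * (t - s))) * Real.exp (κ * t) = Real.exp (κ * s) := by
    rw [← Real.exp_add]; ring_nf
  have h2 : F t * Real.exp (κ * t) ≤ F s * Real.exp (κ * s) := h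
  rw [← e, ← mul_assoc] at h2
  have := Real.exp_pos (κ * t)
  exact le_of_mul_le_mul_right h2 this

lemma hpb_exp_integral (κ s : ℝ) (hκ : 0 < κ) :
    IntegrableOn (fun t => Real.exp (-(κ * (t - s)))) (Ioi s) volume ∧
    ∫ t in Ioi s, Real.exp (-(κ * (t - s))) = κ⁻¹ := by
  have heq : (fun t => Real.exp (-(κ * (t - s)))) = fun t => Real.exp (κ * s) * Real.exp (-κ * t) := by
    funext t; rw [← Real.exp_add]; ring_nf
  have hI : IntegrableOn (fun t => Real.exp (-(κ * (t - s)))) (Ioi s) volume := by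
    rw [heq]; exact (exp_neg_integrableOn_Ioi s hκ).const_mul _
  refine ⟨hI, ?_⟩
  have hderiv : ∀ x ∈ Ici s, HasDerivAt (fun t => -κ⁻¹ * Real.exp (-(κ * (t - s))))
      (Real.exp (-(κ * (x - s)))) x := by
    intro x _
    have h : HasDerivAt (fun t => -(κ * (t - s))) (-κ) x := by
      have h0 := (((hasDerivAt_id x).sub_const s).const_mul κ).neg
      simp only [mul_one] at h0
      exact h0
    have := (h.exp.const_mul (-κ⁻¹))
    refine this.congr_deriv ?_
    rw [mul_comm (Real.exp _) (-κ), ← mul_assoc, neg_mul_neg, inv_mul_cancel₀ hκ.ne', one_mul]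
  have htend : Tendsto (fun t => -κ⁻¹ * Real.exp (-(κ * (t - s)))) atTop (nhds 0) := by
    rw [show (0:ℝ) = -κ⁻¹ * 0 by ring]
    apply Tendsto.const_mul
    apply Real.tendsto_exp_atBot.comp
    apply tendsto_neg_atTop_atBot.comp
    have h1 : Tendsto (fun t : ℝ => t - s) atTop atTop := tendsto_atTop_add_const_right atTop (-s) tendsto_id
    exact h1.const_mul_atTop hκ
  have := integral_Ioi_of_hasDerivAt_of_tendsto' hderiv hI htend
  rw [this]
  simp

lemma hpb_core (F : ℝ → ℝ) (K κ : ℝ) (hK : 0 < K) (hκ : 0 < κ)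
    (hC1 : ContDiff ℝ 1 F) (hnonneg : ∀ t, 0 ≤ F t)
    (hint : Integrable F (volume : Measure ℝ))
    (hdec : ∀ t, K < t → deriv F t ≤ -κ * F t) :
    IntegrableOn (fun t => t * F t) (Ioi K) volume ∧
      ∫ t in Ioi K, (t - K) * F t ≤ κ⁻¹ * ∫ t in Ioi K, F t := by
  have hdiff : Differentiable ℝ F := hC1.differentiable one_ne_zero
  have hFc : Continuous F := hdiff.continuous
  have hexp := hpb_exp_bound F K κ hκ hC1 hnonneg hdec
  -- tail bound
  have hG : ∀ s, K ≤ s → (∫ t in Ioi s, F t) ≤ κ⁻¹ * F s := by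
    intro s hs
    obtain ⟨hIexp, hVexp⟩ := hpb_exp_integral κ s hκ
    calc (∫ t in Ioi s, F t) ≤ ∫ t in Ioi s, F s * Real.exp (-(κ * (t - s))) := by
          apply setIntegral_mono_on hint.integrableOn (hIexp.const_mul _) measurableSet_Ioi
          intro t ht
          exact hexp s hs t (le_of_lt ht)
      _ = F s * κ⁻¹ := by rw [MeasureTheory.integral_const_mul, hVexp]
      _ = κ⁻¹ * F s := mul_comm _ _
  -- integrability of t * F t on Ioi K
  have hintIoi : IntegrableOn (fun t => t * F t) (Ioi K) volume := by
    have hg : IntegrableOn (fun t => (2 * F K * Real.exp (κ * K) / κ) * Real.exp (-(κ/2) * t)) (Ioi K) volume :=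
      (exp_neg_integrableOn_Ioi K (by positivity)).const_mul _
    apply Integrable.mono' hg ((continuous_id.mul hFc).aestronglyMeasurable)
    rw [ae_restrict_iff' measurableSet_Ioi]
    apply ae_of_all
    intro t ht
    have htpos : (0:ℝ) < t := hK.trans ht
    simp only [Pi.mul_apply, id_eq]
    rw [Real.norm_eq_abs, abs_of_nonneg (mul_nonneg htpos.le (hnonneg t))]
    have h1 : F t ≤ F K * Real.exp (-(κ * (t - K))) := hexp K le_rfl t ht.le
    have h2 : t ≤ 2/κ * Real.exp (κ/2 * t) := by
      have h3 := Real.add_one_le_exp (κ/2 * t)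
      have h4 : κ/2 * t ≤ Real.exp (κ/2 * t) := by linarith
      rw [div_mul_eq_mul_div, le_div_iff₀ hκ]
      nlinarith
    have key : 2/κ * Real.exp (κ/2 * t) * (F K * Real.exp (-(κ * (t - K)))) =
        2 * F K * Real.exp (κ * K) / κ * Real.exp (-(κ/2) * t) := by
      rw [show (-(κ * (t - K))) = (κ * K + -(κ * t)) by ring, Real.exp_add,
        show (-(κ/2) * t) = (κ/2 * t + -(κ * t)) by ring, Real.exp_add]
      ring
    have hFKe : 0 ≤ F K * Real.exp (-(κ * (t - K))) := mul_nonneg (hnonneg K) (Real.exp_pos _).le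
    calc t * F t ≤ t * (F K * Real.exp (-(κ * (t - K)))) := by
          exact mul_le_mul_of_nonneg_left h1 htpos.le
      _ ≤ 2/κ * Real.exp (κ/2 * t) * (F K * Real.exp (-(κ * (t - K)))) :=
          mul_le_mul_of_nonneg_right h2 hFKe
      _ = _ := key
  refine ⟨hintIoi, ?_⟩
  -- G and its derivative
  set G : ℝ → ℝ := fun s => ∫ t in Ioi s, F t with hGdef
  have hGderiv : ∀ s, HasDerivAt G (-F s) s := by
    intro s
    have hEq : ∀ u : ℝ, G u = (∫ t, F t) - ((∫ t in Iic K, F t) + ∫ t in K..u, F t) := by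
      intro u
      have h1 : (∫ t in Iic u, F t) + (∫ t in Ioi u, F t) = ∫ t, F t :=
        intervalIntegral.integral_Iic_add_Ioi hint.integrableOn hint.integrableOn
      have h2 : (∫ t in Iic u, F t) - (∫ t in Iic K, F t) = ∫ t in K..u, F t :=
        intervalIntegral.integral_Iic_sub_Iic hint.integrableOn hint.integrableOn
      simp only [hGdef]
      linarith
    have hd : HasDerivAt (fun u => (∫ t, F t) - ((∫ t in Iic K, F t) + ∫ t in K..u, F t)) (-F s) s := by
      have h5 := intervalIntegral.integral_hasDerivAt_right
        ((hint.intervalIntegrable : IntervalIntegrable F volume K s))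
        (hFc.stronglyMeasurable.stronglyMeasurableAtFilter)
        hFc.continuousAt
      simpa using ((h5.const_add (∫ t in Iic K, F t)).const_sub (∫ t, F t))
    exact (funext hEq : G = _) ▸ hd
  have hGcont : Continuous G :=
    (Differentiable.continuous (fun s => (hGderiv s).differentiableAt))
  have hGnonneg : ∀ s, 0 ≤ G s := fun s =>
    setIntegral_nonneg measurableSet_Ioi (fun x _ => hnonneg x)
  have hsubint : IntegrableOn (fun t => (t - K) * F t) (Ioi K) volume := by
    have heq : (fun t => (t - K) * F t) = fun t => t * F t - K * F t := by funext t; ring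
    rw [heq]
    exact hintIoi.sub (hint.integrableOn.const_mul K)
  have hmono : ∀ x, K ≤ x → (∫ t in K..x, (t - K) * F t) ≤ κ⁻¹ * ∫ t in Ioi K, F t := by
    intro x hx
    have hΦ : ∀ t ∈ Set.uIcc K x, HasDerivAt (fun u => (u - K) * G u) (G t + (t - K) * -F t) t := by
      intro t _
      have h0 := (((hasDerivAt_id t).sub_const K).mul (hGderiv t))
      rw [one_mul] at h0
      exact h0
    have hcontD : Continuous (fun t => G t + (t - K) * -F t) :=
      hGcont.add (((continuous_id.sub continuous_const)).mul hFc.neg)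
    have hibp := intervalIntegral.integral_eq_sub_of_hasDerivAt hΦ (hcontD.intervalIntegrable K x)
    have hii1 : IntervalIntegrable G volume K x := hGcont.intervalIntegrable K x
    have hii2 : IntervalIntegrable (fun t => (t - K) * F t) volume K x :=
      (((continuous_id.sub continuous_const)).mul hFc).intervalIntegrable K x
    have hsplit : (∫ t in K..x, (G t + (t - K) * -F t)) =
        (∫ t in K..x, G t) - ∫ t in K..x, (t - K) * F t := by
      have h1 : (fun t => G t + (t - K) * -F t) = fun t => G t - (t - K) * F t := by
        funext t; ring
      rw [h1, intervalIntegral.integral_sub hii1 hii2]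
    have hGx : 0 ≤ (x - K) * G x := mul_nonneg (by linarith) (hGnonneg x)
    have hstep1 : (∫ t in K..x, (t - K) * F t) ≤ ∫ t in K..x, G t := by
      rw [hsplit] at hibp
      simp only [sub_self, zero_mul, sub_zero] at hibp
      linarith
    have hstep2 : (∫ t in K..x, G t) ≤ ∫ t in K..x, κ⁻¹ * F t := by
      apply intervalIntegral.integral_mono_on hx hii1 ((continuous_const.mul hFc).intervalIntegrable K x)
      intro t ht
      exact hG t ht.1
    have hstep3 : (∫ t in K..x, κ⁻¹ * F t) ≤ κ⁻¹ * ∫ t in Ioi K, F t := by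
      rw [intervalIntegral.integral_const_mul, intervalIntegral.integral_of_le hx]
      apply mul_le_mul_of_nonneg_left _ (by positivity)
      apply setIntegral_mono_set hint.integrableOn (ae_of_all _ hnonneg)
      exact HasSubset.Subset.eventuallyLE Ioc_subset_Ioi_self
    linarith
  have htendS := intervalIntegral_tendsto_integral_Ioi K hsubint tendsto_id
  exact le_of_tendsto htendS (eventually_atTop.2 ⟨K, fun x hx => hmono x hx⟩)

lemma hpb_right (F : ℝ → ℝ) (K κ : ℝ) (hK : 0 < K) (hκ : 0 < κ)
    (hC1 : ContDiff ℝ 1 F) (hnonneg : ∀ t, 0 ≤ F t)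
    (hint : Integrable F (volume : Measure ℝ))
    (hdec : ∀ t, K < t → deriv F t ≤ -κ * F t) :
    IntegrableOn (fun t => t * F t) (Ioi K) volume ∧
      (∫ t in Ioi K, |t| * F t) ≤
        κ⁻¹ * (∫ t in Ioi K, F t) + K * (∫ t in Ioi K, F t) := by
  obtain ⟨h1, h2⟩ := hpb_core F K κ hK hκ hC1 hnonneg hint hdec
  refine ⟨h1, ?_⟩
  have hKF : IntegrableOn (fun t => K * F t) (Ioi K) volume := hint.integrableOn.const_mul K
  have hsubint : IntegrableOn (fun t => (t - K) * F t) (Ioi K) volume := by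
    have heq : (fun t => (t - K) * F t) = fun t => t * F t - K * F t := by funext t; ring
    rw [heq]
    exact h1.sub hKF
  have hcongr : (∫ t in Ioi K, |t| * F t) =
      ∫ t in Ioi K, ((t - K) * F t + K * F t) := by
    apply setIntegral_congr_fun measurableSet_Ioi
    intro t ht
    have : (0:ℝ) < t := hK.trans ht
    simp only [abs_of_nonneg this.le]
    ring
  rw [hcongr, integral_add hsubint hKF, MeasureTheory.integral_const_mul]
  exact add_le_add h2 le_rfl

lemma hpb_integrableOn_neg {f : ℝ → ℝ} {c : ℝ}
    (h : IntegrableOn (fun x => f (-x)) (Ioi c) volume) : IntegrableOn f (Iic (-c)) volume := by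
  have h_map : ((volume : Measure ℝ).restrict (Ici c)).map Neg.neg
      = (volume : Measure ℝ).restrict (Iic (-c)) := by
    conv => rhs; rw [← Measure.map_neg_eq_self (volume : Measure ℝ),
      measurableEmbedding_neg.restrict_map]
    simp
  rw [IntegrableOn, ← h_map, measurableEmbedding_neg.integrable_map_iff]
  exact (integrableOn_Ici_iff_integrableOn_Ioi).2 h

/-- For `f` an `L²`-harmonic spinor of norm one (of the twisted negative Dirac
operator of an `L²`-finite instanton), set `F(t) = ∫_{{t}×T³} |f|²`, so that `F ≥ 0` and
`∫_ℝ F = 1`.  If there are `K, κ > 0` with `F'(t) ≤ -κ F(t)` for `t > K` and `F'(t) ≥ κ F(t)`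
for `t < -K`, then `t ↦ t·F(t)` is integrable and `|∫_ℝ t F(t) dt| ≤ 2K + κ⁻¹`
(this quantity computes the Higgs-field pairing `⟨Φ̂ f, f⟩` up to a factor `2π√-1`). -/
theorem higgs_pairing_bound (F : ℝ → ℝ) (K κ : ℝ) (hK : 0 < K) (hκ : 0 < κ)
    (hC1 : ContDiff ℝ 1 F)
    (hnonneg : ∀ t, 0 ≤ F t)
    (hint : Integrable F (volume : Measure ℝ))
    (hmass : ∫ t, F t = 1)
    (hdec : ∀ t, K < t → deriv F t ≤ -κ * F t)
    (hinc : ∀ t, t < -K → κ * F t ≤ deriv F t) :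
    Integrable (fun t => t * F t) (volume : Measure ℝ) ∧
      |∫ t, t * F t| ≤ 2 * K + κ⁻¹ := by
  have hFc : Continuous F := (hC1.differentiable one_ne_zero).continuous
  set Fm : ℝ → ℝ := fun t => F (-t) with hFm
  have hC1m : ContDiff ℝ 1 Fm := hC1.comp contDiff_neg
  have hnonnegm : ∀ t, 0 ≤ Fm t := fun t => hnonneg (-t)
  have hintm : Integrable Fm volume := hint.comp_neg
  have hdecm : ∀ t, K < t → deriv Fm t ≤ -κ * Fm t := by
    intro t ht
    have hd : HasDerivAt Fm (deriv F (-t) * -1) t :=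
      (((hC1.differentiable one_ne_zero) (-t)).hasDerivAt.comp t (hasDerivAt_neg t))
    rw [hd.deriv]
    have := hinc (-t) (by linarith)
    simp only [hFm]
    linarith
  obtain ⟨hIoiP, hBP⟩ := hpb_right F K κ hK hκ hC1 hnonneg hint hdec
  obtain ⟨hIoiM, hBM⟩ := hpb_right Fm K κ hK hκ hC1m hnonnegm hintm hdecm
  set IP := ∫ t in Ioi K, F t with hIP
  set IM := ∫ t in Ioi K, Fm t with hIM
  set I0 := ∫ t in Ioc (-K) K, F t with hI0def
  have hIMeq : IM = ∫ t in Iic (-K), F t := integral_comp_neg_Ioi K F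
  have hKK : (-K : ℝ) ≤ K := by linarith
  -- integrability pieces for t ↦ t * F t
  have hIic : IntegrableOn (fun t => t * F t) (Iic (-K)) volume := by
    apply hpb_integrableOn_neg
    have heq : (fun x => (-x) * F (-x)) = fun x => -(x * Fm x) := by
      funext x; simp only [hFm]; ring
    exact heq ▸ hIoiM.neg
  have hIoc : IntegrableOn (fun t => t * F t) (Ioc (-K) K) volume :=
    (continuous_id.mul hFc).integrableOn_Ioc
  have hintall : Integrable (fun t => t * F t) volume := by
    rw [← integrableOn_univ, ← Iic_union_Ioi (a := -K)]
    refine hIic.union ?_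
    rw [← Ioc_union_Ioi_eq_Ioi hKK]
    exact hIoc.union hIoiP
  refine ⟨hintall, ?_⟩
  -- integrability pieces for t ↦ |t| * F t
  have hA_Ioi : IntegrableOn (fun t => |t| * F t) (Ioi K) volume :=
    hIoiP.congr_fun (fun x hx => by
      simp only [abs_of_nonneg (le_of_lt (hK.trans hx))]) measurableSet_Ioi
  have hA_IoiM : IntegrableOn (fun t => |t| * Fm t) (Ioi K) volume :=
    hIoiM.congr_fun (fun x hx => by
      simp only [abs_of_nonneg (le_of_lt (hK.trans hx))]) measurableSet_Ioi
  have hA_Iic : IntegrableOn (fun t => |t| * F t) (Iic (-K)) volume := by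
    apply hpb_integrableOn_neg
    have heq : (fun x : ℝ => |(-x)| * F (-x)) = fun x => |x| * Fm x := by
      funext x; simp [hFm]
    exact heq ▸ hA_IoiM
  have hA_Ioc : IntegrableOn (fun t => |t| * F t) (Ioc (-K) K) volume :=
    (continuous_abs.mul hFc).integrableOn_Ioc
  have hA_IoiNeg : IntegrableOn (fun t => |t| * F t) (Ioi (-K)) volume := by
    rw [← Ioc_union_Ioi_eq_Ioi hKK]; exact hA_Ioc.union hA_Ioi
  -- |∫ t F| ≤ ∫ |t| F
  have habs : ∀ t : ℝ, |t * F t| = |t| * F t := fun t => by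
    rw [abs_mul, abs_of_nonneg (hnonneg t)]
  have h0 : |∫ t, t * F t| ≤ ∫ t, |t| * F t := by
    have h := norm_integral_le_integral_norm (μ := (volume : Measure ℝ)) (fun t => t * F t)
    simp only [Real.norm_eq_abs, habs] at h
    exact h
  -- splitting
  have hsplit1 : (∫ t, |t| * F t) =
      (∫ t in Iic (-K), |t| * F t) + ∫ t in Ioi (-K), |t| * F t :=
    (intervalIntegral.integral_Iic_add_Ioi hA_Iic hA_IoiNeg).symm
  have hsplit2 : (∫ t in Ioi (-K), |t| * F t) =
      (∫ t in Ioc (-K) K, |t| * F t) + ∫ t in Ioi K, |t| * F t := by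
    rw [← Ioc_union_Ioi_eq_Ioi hKK]
    exact setIntegral_union (Ioc_disjoint_Ioi le_rfl) measurableSet_Ioi hA_Ioc hA_Ioi
  -- left piece equals the Fm piece
  have hleft : (∫ t in Iic (-K), |t| * F t) = ∫ t in Ioi K, |t| * Fm t := by
    rw [← integral_comp_neg_Ioi]
    apply setIntegral_congr_fun measurableSet_Ioi
    intro x _
    simp [hFm]
  -- middle bound
  have hmid : (∫ t in Ioc (-K) K, |t| * F t) ≤ K * I0 := by
    rw [hI0def, ← MeasureTheory.integral_const_mul]
    apply setIntegral_mono_on hA_Ioc (hint.integrableOn.const_mul K) measurableSet_Ioc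
    intro t ht
    exact mul_le_mul_of_nonneg_right (abs_le.2 ⟨le_of_lt ht.1, ht.2⟩) (hnonneg t)
  -- nonnegativity of pieces
  have hI0n : 0 ≤ I0 := setIntegral_nonneg measurableSet_Ioc (fun x _ => hnonneg x)
  have hIPn : 0 ≤ IP := setIntegral_nonneg measurableSet_Ioi (fun x _ => hnonneg x)
  have hIMn : 0 ≤ IM := setIntegral_nonneg measurableSet_Ioi (fun x _ => hnonnegm x)
  -- total mass
  have hmass2 : IM + (I0 + IP) = 1 := by
    rw [hIMeq, ← hmass]
    have hs2 : (∫ t in Ioi (-K), F t) = I0 + IP := by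
      rw [hI0def, hIP, ← Ioc_union_Ioi_eq_Ioi hKK]
      exact setIntegral_union (Ioc_disjoint_Ioi le_rfl) measurableSet_Ioi
        hint.integrableOn hint.integrableOn
    rw [← hs2]
    exact intervalIntegral.integral_Iic_add_Ioi hint.integrableOn hint.integrableOn
  have hκinv : 0 ≤ κ⁻¹ := by positivity
  have hfinal : (κ⁻¹ * IM + K * IM) + (K * I0 + (κ⁻¹ * IP + K * IP)) ≤ 2 * K + κ⁻¹ := by
    nlinarith [mul_nonneg hκinv hI0n, hK.le, hIMn, hIPn, hI0n, hmass2]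
  calc |∫ t, t * F t| ≤ ∫ t, |t| * F t := h0
    _ = (∫ t in Iic (-K), |t| * F t) +
        ((∫ t in Ioc (-K) K, |t| * F t) + ∫ t in Ioi K, |t| * F t) := by
        rw [hsplit1, hsplit2]
    _ ≤ (κ⁻¹ * IM + K * IM) + (K * I0 + (κ⁻¹ * IP + K * IP)) := by
        refine add_le_add (hleft ▸ hBM) (add_le_add hmid hBP)
    _ ≤ 2 * K + κ⁻¹ := hfinal
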